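/- Let ρ be a quantum state on ℂ^d (positive semidefinite with trace 1) and let Π₁, …, Π_N be orthogonal projections on ℂ^d. Then ‖ ρ − Π₁ ⋯ Π_N ⋯ Π₁ ρ Π₁ ⋯ Π_N ⋯ Π₁ ‖₁ ≤ 2√2 · 2^{1/4} · ( Σ_{i=1}^{N} Tr{(I − Π_i) ρ} )^{1/4}, where Π₁ ⋯ Π_N ⋯ Π₁ denotes the product Π₁ Π₂ ⋯ Π_N ⋯ Π₂ Π₁. -/

import Mathlib

open Matrix ComplexOrder

/-- The trace norm `‖A‖₁ = Tr √(A† A)` of a complex matrix. -/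
noncomputable def traceNorm {n : Type*} [Fintype n] [DecidableEq n]
    (A : Matrix n n ℂ) : ℝ :=
  ((Matrix.posSemidef_conjTranspose_mul_self A).isHermitian.eigenvectorUnitary.1 *
      diagonal (((↑) : ℝ → ℂ) ∘ (Real.sqrt ∘ (Matrix.posSemidef_conjTranspose_mul_self A).isHermitian.eigenvalues)) *
      (star (Matrix.posSemidef_conjTranspose_mul_self A).isHermitian.eigenvectorUnitary :
        Matrix n n ℂ)).trace.re

open scoped MatrixOrder

namespace GentleAux

variable {n : Type*} [Fintype n] [DecidableEq n]

/-- Squared Hilbert–Schmidt norm. -/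
noncomputable def n2 (X : Matrix n n ℂ) : ℝ := (Xᴴ * X).trace.re

lemma n2_def (X : Matrix n n ℂ) : n2 X = (Xᴴ * X).trace.re := rfl

noncomputable def toE (X : Matrix n n ℂ) : EuclideanSpace ℂ (n × n) :=
  WithLp.toLp 2 (fun p : n × n => X p.2 p.1)

lemma inner_toE (X Y : Matrix n n ℂ) : (inner ℂ (toE X) (toE Y) : ℂ) = (Xᴴ * Y).trace := by
  simp only [PiLp.inner_apply, RCLike.inner_apply, toE, PiLp.toLp_apply, Matrix.trace, Matrix.diag,
    Matrix.mul_apply, Matrix.conjTranspose_apply, Fintype.sum_prod_type]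
  refine Finset.sum_congr rfl fun i _ => Finset.sum_congr rfl fun j _ => ?_
  rw [mul_comm]; rfl

lemma norm_toE (X : Matrix n n ℂ) : ‖toE X‖ = Real.sqrt (n2 X) := by
  rw [norm_eq_sqrt_re_inner (𝕜 := ℂ), inner_toE]; rfl

lemma n2_nonneg (X : Matrix n n ℂ) : 0 ≤ n2 X := by
  have h : (0:ℝ) ≤ RCLike.re (inner ℂ (toE X) (toE X) : ℂ) := inner_self_nonneg
  rwa [inner_toE] at h

lemma abs_trace_le (X Y : Matrix n n ℂ) :
    |(Xᴴ * Y).trace.re| ≤ Real.sqrt (n2 X) * Real.sqrt (n2 Y) := by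
  have h := norm_inner_le_norm (𝕜 := ℂ) (toE X) (toE Y)
  rw [inner_toE, norm_toE, norm_toE] at h
  exact le_trans (Complex.abs_re_le_norm _) h

lemma trace_re_le (X Y : Matrix n n ℂ) :
    (Xᴴ * Y).trace.re ≤ Real.sqrt (n2 X) * Real.sqrt (n2 Y) :=
  le_trans (le_abs_self _) (abs_trace_le X Y)

lemma proj_conj {Q : Matrix n n ℂ} (hQ : Qᴴ = Q) (hQ2 : Q * Q = Q) (v w : Matrix n n ℂ) :
    (Q * w)ᴴ * (Q * v) = wᴴ * (Q * v) := by
  rw [conjTranspose_mul, mul_assoc, ← mul_assoc Qᴴ, hQ, hQ2]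

lemma one_sub_herm {Q : Matrix n n ℂ} (hQ : Qᴴ = Q) : (1 - Q)ᴴ = 1 - Q := by
  rw [conjTranspose_sub, conjTranspose_one, hQ]

lemma one_sub_idem {Q : Matrix n n ℂ} (hQ2 : Q * Q = Q) : (1 - Q) * (1 - Q) = 1 - Q := by
  have h : (1 - Q) * (1 - Q) = 1 - Q - Q + Q * Q := by noncomm_ring
  rw [h, hQ2]; abel

lemma pyth {Q : Matrix n n ℂ} (hQ : Qᴴ = Q) (hQ2 : Q * Q = Q) (v : Matrix n n ℂ) :
    n2 (Q * v) + n2 ((1 - Q) * v) = n2 v := by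
  simp only [n2_def]
  rw [proj_conj hQ hQ2 v v, proj_conj (one_sub_herm hQ) (one_sub_idem hQ2) v v,
    ← Complex.add_re, ← trace_add]
  congr 2
  noncomm_ring

lemma n2_eq (A r : Matrix n n ℂ) (hr : rᴴ = r) :
    n2 (A * r) = ((Aᴴ * A) * (r * r)).trace.re := by
  rw [n2_def]
  congr 1
  calc ((A * r)ᴴ * (A * r)).trace = (rᴴ * (Aᴴ * (A * r))).trace := by
        rw [conjTranspose_mul, mul_assoc]
    _ = ((Aᴴ * (A * r)) * rᴴ).trace := trace_mul_comm _ _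
    _ = ((Aᴴ * A) * (r * r)).trace := by rw [hr]; simp only [mul_assoc]

lemma tr_form (Z Y r : Matrix n n ℂ) (hr : rᴴ = r) :
    ((Zᴴ * r)ᴴ * (Y * r)).trace = ((Z * Y) * (r * r)).trace := by
  calc ((Zᴴ * r)ᴴ * (Y * r)).trace = (rᴴ * (Zᴴᴴ * (Y * r))).trace := by
        rw [conjTranspose_mul, mul_assoc]
    _ = ((Zᴴᴴ * (Y * r)) * rᴴ).trace := trace_mul_comm _ _
    _ = ((Z * Y) * (r * r)).trace := by
        rw [hr, conjTranspose_conjTranspose]; simp only [mul_assoc]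

lemma n2_prod_le : ∀ (l : List (Matrix n n ℂ)), (∀ Q ∈ l, Qᴴ = Q ∧ Q * Q = Q) →
    ∀ v : Matrix n n ℂ, n2 (l.reverse.prod * v) ≤ n2 v := by
  intro l
  induction l with
  | nil => intro _ v; simp
  | cons Q t ih =>
    intro h v
    obtain ⟨hQ, hQ2⟩ := h Q (List.mem_cons_self)
    have hrev : (Q :: t).reverse.prod = t.reverse.prod * Q := by
      rw [List.reverse_cons, List.prod_append, List.prod_cons, List.prod_nil, mul_one]
    rw [hrev, mul_assoc]
    refine le_trans (ih (fun R hR => h R (List.mem_cons_of_mem _ hR)) (Q * v)) ?_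
    have hp := pyth hQ hQ2 v
    linarith [n2_nonneg ((1 - Q) * v)]

lemma cs2 (s t u v : ℝ) :
    s * u + t * v ≤ Real.sqrt (s ^ 2 + t ^ 2) * Real.sqrt (u ^ 2 + v ^ 2) := by
  rw [← Real.sqrt_mul (by positivity)]
  refine le_trans (le_abs_self _) ?_
  rw [← Real.sqrt_sq_eq_abs]
  apply Real.sqrt_le_sqrt
  nlinarith [sq_nonneg (s * v - t * u)]

lemma gao : ∀ (l : List (Matrix n n ℂ)), (∀ Q ∈ l, Qᴴ = Q ∧ Q * Q = Q) →
    ∀ v w : Matrix n n ℂ,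
    (wᴴ * (v - l.reverse.prod * v)).trace.re ≤
      Real.sqrt ((l.map (fun Q => n2 ((1 - Q) * w))).sum) *
        Real.sqrt (n2 v - n2 (l.reverse.prod * v)) := by
  intro l
  induction l with
  | nil => intro _ v w; simp
  | cons Q t ih =>
    intro h v w
    obtain ⟨hQ, hQ2⟩ := h Q (List.mem_cons_self)
    have ht : ∀ R ∈ t, Rᴴ = R ∧ R * R = R := fun R hR => h R (List.mem_cons_of_mem _ hR)
    have h1 : (1 - Q)ᴴ = 1 - Q := one_sub_herm hQ
    have h2 : (1 - Q) * (1 - Q) = 1 - Q := one_sub_idem hQ2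
    have hrev : (Q :: t).reverse.prod = t.reverse.prod * Q := by
      rw [List.reverse_cons, List.prod_append, List.prod_cons, List.prod_nil, mul_one]
    rw [hrev]
    have hsplit : wᴴ * (v - t.reverse.prod * Q * v)
        = wᴴ * ((1 - Q) * v) + wᴴ * (Q * v - t.reverse.prod * (Q * v)) := by noncomm_ring
    rw [hsplit, trace_add, Complex.add_re]
    have e1 : (wᴴ * ((1 - Q) * v)).trace.re
        ≤ Real.sqrt (n2 ((1 - Q) * w)) * Real.sqrt (n2 ((1 - Q) * v)) := by
      rw [← proj_conj h1 h2 v w]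
      exact trace_re_le _ _
    have e2 := ih ht (Q * v) w
    have hsum0 : 0 ≤ (t.map (fun R => n2 ((1 - R) * w))).sum := by
      apply List.sum_nonneg
      intro x hx
      obtain ⟨R, _, rfl⟩ := List.mem_map.mp hx
      exact n2_nonneg _
    have hq0 : 0 ≤ n2 (Q * v) - n2 (t.reverse.prod * (Q * v)) := by
      have := n2_prod_le t ht (Q * v); linarith
    have hpy := pyth hQ hQ2 v
    have key := cs2 (Real.sqrt (n2 ((1 - Q) * w)))
      (Real.sqrt ((t.map (fun R => n2 ((1 - R) * w))).sum))
      (Real.sqrt (n2 ((1 - Q) * v)))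
      (Real.sqrt (n2 (Q * v) - n2 (t.reverse.prod * (Q * v))))
    rw [Real.sq_sqrt (n2_nonneg _), Real.sq_sqrt (n2_nonneg _), Real.sq_sqrt hsum0,
      Real.sq_sqrt hq0] at key
    have hmap : ((Q :: t).map (fun R => n2 ((1 - R) * w))).sum
        = n2 ((1 - Q) * w) + (t.map (fun R => n2 ((1 - R) * w))).sum := by
      simp
    have hδ : n2 v - n2 (t.reverse.prod * Q * v)
        = n2 ((1 - Q) * v) + (n2 (Q * v) - n2 (t.reverse.prod * (Q * v))) := by
      rw [mul_assoc]; linarith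
    rw [hmap, hδ]
    calc (wᴴ * ((1 - Q) * v)).trace.re + (wᴴ * (Q * v - t.reverse.prod * (Q * v))).trace.re
        ≤ Real.sqrt (n2 ((1 - Q) * w)) * Real.sqrt (n2 ((1 - Q) * v))
          + Real.sqrt ((t.map (fun R => n2 ((1 - R) * w))).sum) *
            Real.sqrt (n2 (Q * v) - n2 (t.reverse.prod * (Q * v))) := add_le_add e1 e2
      _ ≤ _ := key

lemma prod_contraction : ∀ (l : List (Matrix n n ℂ)), (∀ Q ∈ l, Qᴴ = Q ∧ Q * Q = Q) →
    ((1 : Matrix n n ℂ) - l.prodᴴ * l.prod).PosSemidef := by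
  intro l
  induction l with
  | nil => simp [Matrix.PosSemidef.zero]
  | cons Q t ih =>
    intro h
    obtain ⟨hQ, hQ2⟩ := h Q (List.mem_cons_self)
    have ht := ih (fun R hR => h R (List.mem_cons_of_mem _ hR))
    have key : (1 : Matrix n n ℂ) - (Q * t.prod)ᴴ * (Q * t.prod)
        = (1 - t.prodᴴ * t.prod) + ((1 - Q) * t.prod)ᴴ * ((1 - Q) * t.prod) := by
      rw [proj_conj hQ hQ2 t.prod t.prod,
        proj_conj (one_sub_herm hQ) (one_sub_idem hQ2) t.prod t.prod]
      noncomm_ring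
    rw [List.prod_cons, key]
    exact ht.add (posSemidef_conjTranspose_mul_self _)


lemma exists_dual (M : Matrix n n ℂ) (hM : M.IsHermitian) :
    ∃ W : Matrix n n ℂ, W * Wᴴ = 1 ∧ traceNorm M = (W * M).trace.re := by
  classical
  set U : Matrix n n ℂ := (hM.eigenvectorUnitary : Matrix n n ℂ) with hU
  have hU1 : U * Uᴴ = 1 := by
    have h := Matrix.mem_unitaryGroup_iff.mp hM.eigenvectorUnitary.2
    rwa [star_eq_conjTranspose] at h
  have hU2 : Uᴴ * U = 1 := by
    have h := Matrix.mem_unitaryGroup_iff'.mp hM.eigenvectorUnitary.2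
    rwa [star_eq_conjTranspose] at h
  set lam : n → ℝ := hM.eigenvalues with hlam
  have hspec : M = U * diagonal (fun i => (lam i : ℂ)) * Uᴴ := by
    have h := hM.spectral_theorem
    rw [Unitary.conjStarAlgAut_apply, star_eq_conjTranspose] at h
    exact h
  have hconj : ∀ X Y : Matrix n n ℂ, (U * X * Uᴴ) * (U * Y * Uᴴ) = U * (X * Y) * Uᴴ := by
    intro X Y
    simp only [mul_assoc]
    rw [← mul_assoc Uᴴ U, hU2, one_mul]
  have htrconj : ∀ X : Matrix n n ℂ, (U * X * Uᴴ).trace = X.trace := by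
    intro X
    rw [trace_mul_comm, ← mul_assoc, hU2, one_mul]
  set sg : n → ℝ := fun i => if 0 ≤ lam i then 1 else -1 with hsg
  have hsg2 : ∀ i, (sg i : ℂ) * (sg i : ℂ) = 1 := by
    intro i; by_cases h : 0 ≤ lam i <;> simp [hsg, h]
  have hsglam : ∀ i, (sg i : ℂ) * (lam i : ℂ) = ((|lam i| : ℝ) : ℂ) := by
    intro i
    by_cases h : 0 ≤ lam i
    · simp [hsg, h, abs_of_nonneg h]
    · push_neg at h
      rw [abs_of_neg h]; simp [hsg, not_le.mpr h]
  set D : Matrix n n ℂ := diagonal (fun i => (sg i : ℂ)) with hD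
  set W : Matrix n n ℂ := U * D * Uᴴ with hW
  have hDH : Dᴴ = D := by
    rw [hD, diagonal_conjTranspose]
    have hst : (star fun i => ((sg i : ℝ) : ℂ)) = fun i => ((sg i : ℝ) : ℂ) := by
      funext i
      simp [Complex.conj_ofReal]
    rw [hst]
  have hWH : Wᴴ = W := by
    rw [hW, conjTranspose_mul, conjTranspose_mul, hDH, conjTranspose_conjTranspose, mul_assoc]
  have hWW : W * Wᴴ = 1 := by
    rw [hWH, hW, hconj]
    have hDD : D * D = 1 := by
      rw [hD, diagonal_mul_diagonal]
      have : (fun i => (sg i : ℂ) * (sg i : ℂ)) = fun _ => (1 : ℂ) := funext hsg2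
      rw [this, diagonal_one]
    rw [hDD, mul_one, hU1]
  refine ⟨W, hWW, ?_⟩
  have htrWM : (W * M).trace.re = ∑ i, |lam i| := by
    rw [hspec, hW, hconj, htrconj, diagonal_mul_diagonal, trace_diagonal]
    rw [Complex.re_sum]
    congr 1; funext i
    rw [hsglam i]
    exact Complex.ofReal_re _
  set S : Matrix n n ℂ := U * diagonal (fun i => ((|lam i| : ℝ) : ℂ)) * Uᴴ with hS
  have hSpsd : S.PosSemidef := by
    rw [hS, ← star_eq_conjTranspose]
    exact Matrix.PosSemidef.mul_mul_conjTranspose_same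
      (Matrix.posSemidef_diagonal_iff.mpr fun i => Complex.zero_le_real.mpr (abs_nonneg _)) U
  have hS2 : S ^ 2 = Mᴴ * M := by
    rw [hM.eq, pow_two, hS, hconj, hspec, hconj, diagonal_mul_diagonal, diagonal_mul_diagonal]
    have he : (fun i => ((|lam i| : ℝ) : ℂ) * ((|lam i| : ℝ) : ℂ))
        = fun i => ((lam i : ℝ) : ℂ) * ((lam i : ℝ) : ℂ) := by
      funext i
      rw [← Complex.ofReal_mul, ← Complex.ofReal_mul, abs_mul_abs_self]
    rw [he]
  have hsqrt : S = CFC.sqrt (Mᴴ * M) :=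
    (CFC.sqrt_unique (by rw [← pow_two]; exact hS2) hSpsd.nonneg).symm
  have htn : traceNorm M = (CFC.sqrt (Mᴴ * M)).trace.re := by
    rw [CFC.sqrt_eq_cfc,
      cfc_nnreal_eq_real _ (Mᴴ * M) (Matrix.posSemidef_conjTranspose_mul_self M).nonneg,
      (Matrix.posSemidef_conjTranspose_mul_self M).isHermitian.cfc_eq]
    have hf : (fun x : ℝ => ((NNReal.sqrt x.toNNReal : NNReal) : ℝ)) = Real.sqrt := by
      funext x
      rw [Real.coe_sqrt]
      rcases le_total 0 x with h | h
      · rw [Real.coe_toNNReal _ h]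
      · rw [Real.toNNReal_of_nonpos h, NNReal.coe_zero, Real.sqrt_zero,
          Real.sqrt_eq_zero_of_nonpos h]
    rw [hf, traceNorm, IsHermitian.cfc, Unitary.conjStarAlgAut_apply]
    rfl
  rw [htn, ← hsqrt, htrWM, hS, htrconj, trace_diagonal, Complex.re_sum]
  exact Finset.sum_congr rfl fun i _ => (Complex.ofReal_re _).symm

end GentleAux

set_option maxHeartbeats 1000000 in
/-- **Gentle sequential measurement by measuring forward and then in reverse.**
For a quantum state `ρ` and orthogonal projections `Π₁, …, Π_N` on `ℂ^d`, with
`B = Π₁ Π₂ ⋯ Π_{N−1} Π_N Π_{N−1} ⋯ Π₂ Π₁` (the product over the palindromic list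
`[Π₁, …, Π_N, Π_{N−1}, …, Π₁]`),
`‖ρ − B ρ B‖₁ ≤ 2 √2 · 2^{1/4} · (∑ᵢ Tr ((I − Πᵢ) ρ))^{1/4}`. -/

theorem gentle_forward_backward {d N : ℕ}
    (ρ : Matrix (Fin d) (Fin d) ℂ) (hρ : ρ.PosSemidef) (hρtr : ρ.trace = 1)
    (P : Fin N → Matrix (Fin d) (Fin d) ℂ)
    (hherm : ∀ i, (P i).IsHermitian) (hproj : ∀ i, P i * P i = P i) :
    traceNorm (ρ
        - (List.ofFn P ++ (List.ofFn P).reverse.tail).prod * ρ *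
            (List.ofFn P ++ (List.ofFn P).reverse.tail).prod)
      ≤ 2 * Real.sqrt 2 * (2 : ℝ) ^ ((1 : ℝ) / 4) *
          (∑ i, (((1 : Matrix (Fin d) (Fin d) ℂ) - P i) * ρ).trace.re) ^ ((1 : ℝ) / 4) := by
  classical
  open GentleAux in
  set l : List (Matrix (Fin d) (Fin d) ℂ) := List.ofFn P with hl
  have hlmem : ∀ Q ∈ l, Qᴴ = Q ∧ Q * Q = Q := by
    intro Q hQ
    rw [hl, List.mem_ofFn] at hQ
    obtain ⟨i, rfl⟩ := hQ
    exact ⟨hherm i, hproj i⟩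
  set C : Matrix (Fin d) (Fin d) ℂ := l.reverse.prod with hC
  have hCH : Cᴴ = l.prod := by
    rw [hC, conjTranspose_list_prod, List.map_reverse, List.reverse_reverse]
    congr 1
    calc l.map conjTranspose = l.map id := List.map_congr_left fun Q hQ => (hlmem Q hQ).1
      _ = l := List.map_id _
  set B : Matrix (Fin d) (Fin d) ℂ := Cᴴ * C with hBdef
  have hBeq : (l ++ l.reverse.tail).prod = B := by
    rw [List.prod_append, hBdef, hCH, hC]
    rcases hrl : l.reverse with _ | ⟨a, t⟩
    · simp [hrl]
    · have ha : a ∈ l := by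
        have : a ∈ l.reverse := by rw [hrl]; exact List.mem_cons_self
        exact List.mem_reverse.mp this
      obtain ⟨haH, ha2⟩ := hlmem a ha
      have hlprod : l.prod = t.reverse.prod * a := by
        conv_lhs => rw [← List.reverse_reverse l, hrl]
        rw [List.reverse_cons, List.prod_append, List.prod_cons, List.prod_nil, mul_one]
      have hla : l.prod * a = l.prod := by
        rw [hlprod, mul_assoc, ha2]
      simp only [List.tail_cons, List.prod_cons]
      rw [← mul_assoc, hla]
  rw [hBeq]
  -- basic objects
  have hρH : ρᴴ = ρ := hρ.isHermitian
  set r : Matrix (Fin d) (Fin d) ℂ := CFC.sqrt ρ with hrdef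
  have hrr : r * r = ρ := CFC.sqrt_mul_sqrt_self ρ hρ.nonneg
  have hrH : rᴴ = r := (CFC.sqrt_nonneg ρ).posSemidef.isHermitian
  have hBH : Bᴴ = B := by rw [hBdef, conjTranspose_mul, conjTranspose_conjTranspose]
  have h1B_H : ((1 : Matrix (Fin d) (Fin d) ℂ) - B)ᴴ = 1 - B := one_sub_herm hBH
  -- contraction facts
  have hcon1 : ((1 : Matrix (Fin d) (Fin d) ℂ) - B).PosSemidef := by
    have h := prod_contraction l.reverse (fun Q hQ => hlmem Q (List.mem_reverse.mp hQ))
    rwa [← hC, ← hBdef] at h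
  have hcon2 : ((1 : Matrix (Fin d) (Fin d) ℂ) - C * Cᴴ).PosSemidef := by
    have h := prod_contraction l hlmem
    rw [← hCH, conjTranspose_conjTranspose] at h
    exact h
  have hBB : (B - B * B).PosSemidef := by
    have h := hcon2.conjTranspose_mul_mul_same C
    have heq : Cᴴ * ((1 : Matrix (Fin d) (Fin d) ℂ) - C * Cᴴ) * C = B - B * B := by
      rw [hBdef]; noncomm_ring
    rwa [heq] at h
  -- trace nonnegativity helper
  have tr_nonneg : ∀ {A : Matrix (Fin d) (Fin d) ℂ}, A.PosSemidef → 0 ≤ (A * ρ).trace.re := by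
    intro A hA
    have hsH : (CFC.sqrt A)ᴴ = CFC.sqrt A := (CFC.sqrt_nonneg A).posSemidef.isHermitian
    have hss : CFC.sqrt A * CFC.sqrt A = A := CFC.sqrt_mul_sqrt_self A hA.nonneg
    have h := tr_form (CFC.sqrt A) (CFC.sqrt A) r hrH
    rw [hsH, hss, hrr] at h
    rw [← h]
    exact n2_nonneg _
  -- CS bound helper
  have bound : ∀ Z Y : Matrix (Fin d) (Fin d) ℂ,
      |((Z * Y) * ρ).trace.re| ≤ Real.sqrt (n2 (Zᴴ * r)) * Real.sqrt (n2 (Y * r)) := by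
    intro Z Y
    have h := abs_trace_le (Zᴴ * r) (Y * r)
    rwa [tr_form Z Y r hrH, hrr] at h
  clear_value r B C l
  -- epsilon
  set ε : ℝ := ∑ i, (((1 : Matrix (Fin d) (Fin d) ℂ) - P i) * ρ).trace.re with hε
  have hε_eq : (l.map (fun Q => n2 ((1 - Q) * r))).sum = ε := by
    rw [hl, List.map_ofFn, List.sum_ofFn, hε]
    refine Finset.sum_congr rfl fun i _ => ?_
    have hH : ((1 : Matrix (Fin d) (Fin d) ℂ) - P i)ᴴ = 1 - P i := one_sub_herm (hherm i)
    have h2 : ((1 : Matrix (Fin d) (Fin d) ℂ) - P i) * (1 - P i) = 1 - P i :=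
      one_sub_idem (hproj i)
    rw [Function.comp_apply, n2_eq _ _ hrH, hH, h2, hrr]
  have hε0 : 0 ≤ ε := by
    rw [← hε_eq]
    apply List.sum_nonneg
    intro x hx
    obtain ⟨Q, _, rfl⟩ := List.mem_map.mp hx
    exact n2_nonneg _
  -- delta
  set δ : ℝ := (((1 : Matrix (Fin d) (Fin d) ℂ) - B) * ρ).trace.re with hδdef
  have hδ0 : 0 ≤ δ := tr_nonneg hcon1
  have hn2r : n2 r = 1 := by
    rw [n2_def, hrH, hrr, hρtr, Complex.one_re]
  have hn2Cr : n2 (C * r) = (B * ρ).trace.re := by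
    rw [n2_eq _ _ hrH, ← hBdef, hrr]
  have hδeq : δ = 1 - n2 (C * r) := by
    rw [hn2Cr, hδdef]
    have h : ((1 : Matrix (Fin d) (Fin d) ℂ) - B) * ρ = ρ - B * ρ := by noncomm_ring
    rw [h, trace_sub, Complex.sub_re, hρtr, Complex.one_re]
  -- Gao's union bound
  set tC : ℝ := (C * ρ).trace.re with htCdef
  have htr2 : (rᴴ * (C * r)).trace.re = tC := by
    rw [hrH, trace_mul_comm, mul_assoc, hrr, htCdef]
  have hLHS : (rᴴ * (r - C * r)).trace.re = 1 - tC := by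
    have h : rᴴ * (r - C * r) = rᴴ * r - rᴴ * (C * r) := by noncomm_ring
    rw [h, trace_sub, Complex.sub_re, htr2, hrH, hrr, hρtr, Complex.one_re]
  have hgao := gao l hlmem r r
  rw [← hC, hLHS, hε_eq, hn2r] at hgao
  have hgao' : 1 - tC ≤ Real.sqrt ε * Real.sqrt δ := by
    rw [hδeq]; exact hgao
  have htCle : tC ≤ Real.sqrt (n2 (C * r)) := by
    have h := trace_re_le r (C * r)
    rw [htr2, hn2r, Real.sqrt_one, one_mul] at h
    exact h
  have hb0 : 0 ≤ n2 (C * r) := n2_nonneg _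
  have hkey1 : δ ≤ 2 * (1 - tC) := by
    rw [hδeq]
    nlinarith [Real.sq_sqrt hb0, Real.sqrt_nonneg (n2 (C * r)),
      sq_nonneg (1 - Real.sqrt (n2 (C * r))), htCle]
  have hδ4ε : δ ≤ 4 * ε := by
    nlinarith [Real.sq_sqrt hδ0, Real.sq_sqrt hε0, Real.sqrt_nonneg δ, Real.sqrt_nonneg ε,
      hkey1, hgao', sq_nonneg (Real.sqrt δ - 2 * Real.sqrt ε)]
  -- dual matrix
  have hMH : (ρ - B * ρ * B).IsHermitian := by
    show (ρ - B * ρ * B)ᴴ = ρ - B * ρ * B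
    rw [conjTranspose_sub, conjTranspose_mul, conjTranspose_mul, hρH, hBH, ← mul_assoc]
  obtain ⟨W, hWW, hWtr⟩ := exists_dual _ hMH
  -- n2 computations
  have hn2Wr : n2 (Wᴴ * r) = 1 := by
    rw [n2_eq _ _ hrH, conjTranspose_conjTranspose, hWW, one_mul, hrr, hρtr, Complex.one_re]
  set δ₂ : ℝ := ((((1 : Matrix (Fin d) (Fin d) ℂ) - B) * (1 - B)) * ρ).trace.re with hδ₂def
  have hn2_1Br : n2 (((1 : Matrix (Fin d) (Fin d) ℂ) - B) * r) = δ₂ := by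
    rw [n2_eq _ _ hrH, h1B_H, hrr]
  have hδ₂0 : 0 ≤ δ₂ := by rw [← hn2_1Br]; exact n2_nonneg _
  have hδ₂δ : δ₂ ≤ δ := by
    have h := tr_nonneg hBB
    have e : (((1 : Matrix (Fin d) (Fin d) ℂ) - B) * ρ).trace
        = ((((1 : Matrix (Fin d) (Fin d) ℂ) - B) * (1 - B)) * ρ).trace + ((B - B * B) * ρ).trace := by
      rw [← trace_add, ← add_mul]
      congr 2
      noncomm_ring
    have := congrArg Complex.re e
    rw [Complex.add_re] at this
    rw [hδdef, hδ₂def]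
    linarith
  have hn2X2 : n2 ((((1 : Matrix (Fin d) (Fin d) ℂ) - B) * W)ᴴ * r) = δ₂ := by
    rw [n2_eq _ _ hrH]
    have h : (((1 : Matrix (Fin d) (Fin d) ℂ) - B) * W)ᴴᴴ * (((1 : Matrix (Fin d) (Fin d) ℂ) - B) * W)ᴴ
        = (1 - B) * (1 - B) := by
      rw [conjTranspose_conjTranspose, conjTranspose_mul, h1B_H]
      calc ((1 : Matrix (Fin d) (Fin d) ℂ) - B) * W * (Wᴴ * (1 - B))
          = (1 - B) * ((W * Wᴴ) * (1 - B)) := by simp only [mul_assoc]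
        _ = (1 - B) * (1 - B) := by rw [hWW, one_mul]
    rw [h, hrr]
  set b₂ : ℝ := ((B * B) * ρ).trace.re with hb₂def
  have hn2Br : n2 (B * r) = b₂ := by rw [n2_eq _ _ hrH, hBH, hrr]
  have hb₂0 : 0 ≤ b₂ := by rw [← hn2Br]; exact n2_nonneg _
  have hb₂1 : b₂ ≤ 1 := by
    have hpsd : ((1 : Matrix (Fin d) (Fin d) ℂ) - B * B).PosSemidef := by
      have h := hcon1.add hBB
      have e : ((1 : Matrix (Fin d) (Fin d) ℂ) - B) + (B - B * B) = 1 - B * B := by abel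
      rwa [e] at h
    have h := tr_nonneg hpsd
    have e : (((1 : Matrix (Fin d) (Fin d) ℂ) - B * B) * ρ).trace = ρ.trace - ((B * B) * ρ).trace := by
      rw [sub_mul, one_mul, trace_sub]
    rw [e, Complex.sub_re, hρtr, Complex.one_re] at h
    rw [hb₂def]
    linarith
  have hn2BWr : n2 ((B * W)ᴴ * r) = b₂ := by
    rw [n2_eq _ _ hrH]
    have h : (B * W)ᴴᴴ * (B * W)ᴴ = B * B := by
      rw [conjTranspose_conjTranspose, conjTranspose_mul, hBH]
      calc B * W * (Wᴴ * B) = B * ((W * Wᴴ) * B) := by simp only [mul_assoc]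
        _ = B * B := by rw [hWW, one_mul]
    rw [h, hrr]
  -- trivial bound
  have htriv : traceNorm (ρ - B * ρ * B) ≤ 2 := by
    rw [hWtr]
    have hdec2 : (W * (ρ - B * ρ * B)).trace = ((W * 1) * ρ).trace - (((B * W) * B) * ρ).trace := by
      have e1 : W * (ρ - B * ρ * B) = (W * 1) * ρ - (W * B * ρ) * B := by noncomm_ring
      rw [e1, trace_sub, trace_mul_comm (W * B * ρ) B]
      have e2 : B * (W * B * ρ) = ((B * W) * B) * ρ := by noncomm_ring
      rw [e2]
    rw [hdec2, Complex.sub_re]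
    have hA := bound W 1
    rw [one_mul, hn2Wr, hn2r, Real.sqrt_one, one_mul] at hA
    have hB2 := bound (B * W) B
    rw [hn2BWr, hn2Br] at hB2
    have hsb : Real.sqrt b₂ * Real.sqrt b₂ = b₂ := Real.mul_self_sqrt hb₂0
    have h1 := abs_le.mp hA
    have h2 := abs_le.mp hB2
    linarith [h1.2, h2.1, hsb, hb₂1]
  -- main bound
  have hdec : (W * (ρ - B * ρ * B)).trace
      = ((W * (1 - B)) * ρ).trace + ((((1 - B) * W) * B) * ρ).trace := by
    have e1 : W * (ρ - B * ρ * B) = (W * (1 - B)) * ρ + (W * B * ρ) * (1 - B) := by noncomm_ring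
    rw [e1, trace_add, trace_mul_comm (W * B * ρ) (1 - B)]
    have e2 : ((1 : Matrix (Fin d) (Fin d) ℂ) - B) * (W * B * ρ) = (((1 - B) * W) * B) * ρ := by
      noncomm_ring
    rw [e2]
  have hmain : traceNorm (ρ - B * ρ * B) ≤ 2 * Real.sqrt δ₂ := by
    rw [hWtr, hdec, Complex.add_re]
    have t1 := bound W (1 - B)
    rw [hn2Wr, hn2_1Br, Real.sqrt_one, one_mul] at t1
    have t2 := bound ((1 - B) * W) B
    rw [hn2X2, hn2Br] at t2
    have hsb1 : Real.sqrt b₂ ≤ 1 := by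
      rw [show (1:ℝ) = Real.sqrt 1 by rw [Real.sqrt_one]]
      exact Real.sqrt_le_sqrt hb₂1
    have h1 := (abs_le.mp t1).2
    have h2 := (abs_le.mp t2).2
    have h3 : Real.sqrt δ₂ * Real.sqrt b₂ ≤ Real.sqrt δ₂ :=
      mul_le_of_le_one_right (Real.sqrt_nonneg _) hsb1
    linarith
  -- final arithmetic
  have hδ₂4ε : δ₂ ≤ 4 * ε := le_trans hδ₂δ hδ4ε
  have hT4 : traceNorm (ρ - B * ρ * B) ≤ 4 * Real.sqrt ε := by
    refine hmain.trans ?_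
    have h : Real.sqrt δ₂ ≤ Real.sqrt (4 * ε) := Real.sqrt_le_sqrt hδ₂4ε
    rw [show (4:ℝ) * ε = 2 ^ 2 * ε by norm_num, Real.sqrt_mul (by positivity),
      Real.sqrt_sq (by norm_num)] at h
    linarith
  have hKval : 2 * Real.sqrt 2 * (2:ℝ) ^ ((1:ℝ)/4) = (2:ℝ) ^ ((7:ℝ)/4) := by
    rw [Real.sqrt_eq_rpow]
    calc (2:ℝ) * (2:ℝ) ^ ((1:ℝ)/2) * (2:ℝ) ^ ((1:ℝ)/4)
        = (2:ℝ) ^ (1:ℝ) * (2:ℝ) ^ ((1:ℝ)/2) * (2:ℝ) ^ ((1:ℝ)/4) := by rw [Real.rpow_one]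
      _ = (2:ℝ) ^ ((1:ℝ) + 1/2 + 1/4) := by
          rw [← Real.rpow_add (by norm_num : (0:ℝ) < 2), ← Real.rpow_add (by norm_num : (0:ℝ) < 2)]
      _ = (2:ℝ) ^ ((7:ℝ)/4) := by norm_num
  have hhalf : ((1:ℝ)/2) ^ ((1:ℝ)/4) = (2:ℝ) ^ (-((1:ℝ)/4)) := by
    rw [show (1:ℝ)/2 = (2:ℝ) ^ (-(1:ℝ)) by
        rw [Real.rpow_neg_one]; norm_num,
      ← Real.rpow_mul (by norm_num : (0:ℝ) ≤ 2)]
    norm_num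
  rcases le_or_gt ε (1/2) with hcase | hcase
  · have hε14 : ε ^ ((1:ℝ)/4) ≤ (2:ℝ) ^ (-((1:ℝ)/4)) := by
      rw [← hhalf]
      exact Real.rpow_le_rpow hε0 hcase (by norm_num)
    have hsqrt_eq : Real.sqrt ε = ε ^ ((1:ℝ)/4) * ε ^ ((1:ℝ)/4) := by
      rw [Real.sqrt_eq_rpow, show (1:ℝ)/2 = 1/4 + 1/4 by norm_num,
        Real.rpow_add' hε0 (by norm_num)]
    have h40 : 0 ≤ ε ^ ((1:ℝ)/4) := Real.rpow_nonneg hε0 _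
    have hKval2 : (2:ℝ) ^ ((7:ℝ)/4) = 4 * (2:ℝ) ^ (-((1:ℝ)/4)) := by
      calc (2:ℝ) ^ ((7:ℝ)/4) = (2:ℝ) ^ ((2:ℝ) + -(1/4)) := by norm_num
        _ = (2:ℝ) ^ (2:ℝ) * (2:ℝ) ^ (-((1:ℝ)/4)) := Real.rpow_add (by norm_num) _ _
        _ = 4 * (2:ℝ) ^ (-((1:ℝ)/4)) := by
            rw [show (2:ℝ) ^ (2:ℝ) = 4 by
              rw [show (2:ℝ) = ((2:ℕ):ℝ) by norm_num, Real.rpow_natCast]; norm_num]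
    calc traceNorm (ρ - B * ρ * B) ≤ 4 * Real.sqrt ε := hT4
      _ = 4 * (ε ^ ((1:ℝ)/4) * ε ^ ((1:ℝ)/4)) := by rw [hsqrt_eq]
      _ ≤ 4 * ((2:ℝ) ^ (-((1:ℝ)/4)) * ε ^ ((1:ℝ)/4)) := by
          have := mul_le_mul_of_nonneg_right hε14 h40
          linarith
      _ = (2:ℝ) ^ ((7:ℝ)/4) * ε ^ ((1:ℝ)/4) := by rw [hKval2]; ring
      _ = 2 * Real.sqrt 2 * (2:ℝ) ^ ((1:ℝ)/4) * ε ^ ((1:ℝ)/4) := by rw [hKval]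
  · have hε14 : (2:ℝ) ^ (-((1:ℝ)/4)) ≤ ε ^ ((1:ℝ)/4) := by
      rw [← hhalf]
      exact Real.rpow_le_rpow (by norm_num) hcase.le (by norm_num)
    have hK32 : (2:ℝ) ^ ((7:ℝ)/4) * (2:ℝ) ^ (-((1:ℝ)/4)) = (2:ℝ) ^ ((3:ℝ)/2) := by
      rw [← Real.rpow_add (by norm_num : (0:ℝ) < 2)]
      norm_num
    have h232 : (2:ℝ) ≤ (2:ℝ) ^ ((3:ℝ)/2) := by
      calc (2:ℝ) = (2:ℝ) ^ (1:ℝ) := (Real.rpow_one 2).symm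
        _ ≤ (2:ℝ) ^ ((3:ℝ)/2) := by
            apply Real.rpow_le_rpow_of_exponent_le (by norm_num)
            norm_num
    have hK0 : 0 ≤ (2:ℝ) ^ ((7:ℝ)/4) := by positivity
    calc traceNorm (ρ - B * ρ * B) ≤ 2 := htriv
      _ ≤ (2:ℝ) ^ ((3:ℝ)/2) := h232
      _ = (2:ℝ) ^ ((7:ℝ)/4) * (2:ℝ) ^ (-((1:ℝ)/4)) := hK32.symm
      _ ≤ (2:ℝ) ^ ((7:ℝ)/4) * ε ^ ((1:ℝ)/4) := by
          exact mul_le_mul_of_nonneg_left hε14 hK0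
      _ = 2 * Real.sqrt 2 * (2:ℝ) ^ ((1:ℝ)/4) * ε ^ ((1:ℝ)/4) := by rw [hKval]
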